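/- The full modal language is not finitely characterizable. Concretely: for every finite nonempty set Prop of propositional variables, the formula □⊥ has no finite characterization with respect to the full modal language L_{□,◇,∧,∨,⊤,⊥}[Prop]. -/
import Mathlib


/-- Modal formulas in negation normal form over propositional variables indexed by `ℕ`.
`var p` is the propositional variable `p`; `nvar p` is the negated literal `¬ p`. -/
inductive MF : Type
  | var  : ℕ → MF
  | nvar : ℕ → MF
  | top  : MF
  | bot  : MF
  | and  : MF → MF → MF
  | or   : MF → MF → MF
  | dia  : MF → MF
  | box  : MF → MF

/-- Labels for the connectives `∧, ∨, ◇, □, ⊤, ⊥`. -/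
inductive Conn : Type
  | conj | disj | dia | box | top | bot

/-- The set of connectives occurring in a modal formula. -/
def MF.conns : MF → Set Conn
  | .var _ => ∅
  | .nvar _ => ∅
  | .top => {Conn.top}
  | .bot => {Conn.bot}
  | .and φ ψ => φ.conns ∪ ψ.conns ∪ {Conn.conj}
  | .or φ ψ => φ.conns ∪ ψ.conns ∪ {Conn.disj}
  | .dia φ => φ.conns ∪ {Conn.dia}
  | .box φ => φ.conns ∪ {Conn.box}

/-- The set of propositional variables occurring positively (unnegated) in a formula. -/
def MF.pvars : MF → Set ℕ
  | .var p => {p}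
  | .nvar _ => ∅
  | .top => ∅
  | .bot => ∅
  | .and φ ψ => φ.pvars ∪ ψ.pvars
  | .or φ ψ => φ.pvars ∪ ψ.pvars
  | .dia φ => φ.pvars
  | .box φ => φ.pvars

/-- The set of propositional variables occurring negatively (negated) in a formula. -/
def MF.nvars : MF → Set ℕ
  | .var _ => ∅
  | .nvar p => {p}
  | .top => ∅
  | .bot => ∅
  | .and φ ψ => φ.nvars ∪ ψ.nvars
  | .or φ ψ => φ.nvars ∪ ψ.nvars
  | .dia φ => φ.nvars
  | .box φ => φ.nvars

/-- The set of propositional variables occurring in a formula. -/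
def MF.vars (φ : MF) : Set ℕ := φ.pvars ∪ φ.nvars

/-- `φ ∈ L_C[P]`: the formula `φ` (in negation normal form, built from literals) uses only
connectives from `C` and variables from `P`. -/
def inLang (C : Set Conn) (P : Set ℕ) (φ : MF) : Prop := φ.conns ⊆ C ∧ φ.vars ⊆ P

/-- A formula is positive if no propositional variable occurs negated in it. -/
def Positive (φ : MF) : Prop := φ.nvars = ∅

/-- A formula is negative if every propositional variable occurs only negated in it. -/
def Negative (φ : MF) : Prop := φ.pvars = ∅

/-- `φ ∈ L⁺_C[P]`: positive fragment. -/
def inPosLang (C : Set Conn) (P : Set ℕ) (φ : MF) : Prop := inLang C P φ ∧ Positive φ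

/-- `φ ∈ L⁻_C[P]`: negative fragment. -/
def inNegLang (C : Set Conn) (P : Set ℕ) (φ : MF) : Prop := inLang C P φ ∧ Negative φ

/-- A Kripke model: a set of worlds, an accessibility relation, and a valuation. -/
structure KModel : Type 1 where
  W : Type
  R : W → W → Prop
  V : ℕ → Set W

/-- A pointed Kripke model. -/
structure PModel : Type 1 where
  M : KModel
  s : M.W

/-- Satisfaction of a modal formula at a world of a Kripke model. -/
def KModel.sat (M : KModel) : M.W → MF → Prop
  | s, .var p => s ∈ M.V p
  | s, .nvar p => s ∉ M.V p
  | _, .top => True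
  | _, .bot => False
  | s, .and φ ψ => M.sat s φ ∧ M.sat s ψ
  | s, .or φ ψ => M.sat s φ ∨ M.sat s ψ
  | s, .dia φ => ∃ t, M.R s t ∧ M.sat t φ
  | s, .box φ => ∀ t, M.R s t → M.sat t φ

/-- Satisfaction in a pointed model. -/
def PModel.sat (e : PModel) (φ : MF) : Prop := e.M.sat e.s φ

/-- A pointed model is finite if its set of worlds is finite. -/
def PModel.finite (e : PModel) : Prop := Finite e.M.W

/-- `φ` fits the pair of example sets `(Epos, Eneg)`. -/
def Fits (φ : MF) (Epos Eneg : Set PModel) : Prop :=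
  (∀ e ∈ Epos, e.sat φ) ∧ (∀ e ∈ Eneg, ¬ e.sat φ)

/-- Semantic equivalence of modal formulas. -/
def EquivF (φ ψ : MF) : Prop := ∀ e : PModel, e.sat φ ↔ e.sat ψ

/-- Semantic entailment of modal formulas. -/
def Entails (φ ψ : MF) : Prop := ∀ e : PModel, e.sat φ → e.sat ψ

/-- `(Epos, Eneg)` is a finite characterization of `φ` with respect to the set `L` of
formulas: both sets are finite, consist of finite pointed models, `φ` fits them, and every
`ψ ∈ L` fitting them is semantically equivalent to `φ`. -/
def FinChar (L : Set MF) (φ : MF) (Epos Eneg : Set PModel) : Prop :=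
  Epos.Finite ∧ Eneg.Finite ∧
  (∀ e ∈ Epos, e.finite) ∧ (∀ e ∈ Eneg, e.finite) ∧
  Fits φ Epos Eneg ∧
  ∀ ψ ∈ L, Fits ψ Epos Eneg → EquivF φ ψ

/-- Iterated diamond. -/
def diaIter : ℕ → MF → MF
  | 0, φ => φ
  | n+1, φ => MF.dia (diaIter n φ)

/-- Iterated box. -/
def boxIter : ℕ → MF → MF
  | 0, φ => φ
  | n+1, φ => MF.box (boxIter n φ)

lemma diaIter_pvars (n : ℕ) (φ : MF) : (diaIter n φ).pvars = φ.pvars := by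
  induction n with
  | zero => rfl
  | succ n ih => simp [diaIter, MF.pvars, ih]

lemma diaIter_nvars (n : ℕ) (φ : MF) : (diaIter n φ).nvars = φ.nvars := by
  induction n with
  | zero => rfl
  | succ n ih => simp [diaIter, MF.nvars, ih]

lemma boxIter_pvars (n : ℕ) (φ : MF) : (boxIter n φ).pvars = φ.pvars := by
  induction n with
  | zero => rfl
  | succ n ih => simp [boxIter, MF.pvars, ih]

lemma boxIter_nvars (n : ℕ) (φ : MF) : (boxIter n φ).nvars = φ.nvars := by
  induction n with
  | zero => rfl
  | succ n ih => simp [boxIter, MF.nvars, ih]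

/-- The formula ◇ⁿ⊤ ∧ □ⁿ⁺¹⊥ : "there is a path of length exactly n and none longer". -/
def chi (n : ℕ) : MF := (diaIter n MF.top).and (boxIter (n+1) MF.bot)

lemma dia_mono (M : KModel) : ∀ (n : ℕ) (s : M.W),
    M.sat s (diaIter (n+1) MF.top) → M.sat s (diaIter n MF.top) := by
  intro n
  induction n with
  | zero => intro s _; trivial
  | succ n ih =>
    intro s h
    obtain ⟨t, hRt, ht⟩ := h
    exact ⟨t, hRt, ih t ht⟩

lemma dia_le (M : KModel) {m n : ℕ} (h : m ≤ n) (s : M.W)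
    (hs : M.sat s (diaIter n MF.top)) : M.sat s (diaIter m MF.top) := by
  induction n with
  | zero => obtain rfl := Nat.le_zero.mp h; exact hs
  | succ n ih =>
    rcases Nat.lt_or_ge m (n+1) with hlt | hge
    · exact ih (Nat.lt_succ_iff.mp hlt) (dia_mono M n s hs)
    · obtain rfl := le_antisymm h hge; exact hs

lemma box_dia_contra (M : KModel) : ∀ (n : ℕ) (s : M.W),
    M.sat s (boxIter n MF.bot) → M.sat s (diaIter n MF.top) → False := by
  intro n
  induction n with
  | zero => intro s hb _; exact hb
  | succ n ih =>
    intro s hb hd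
    obtain ⟨t, hRt, ht⟩ := hd
    exact ih t (hb t hRt) ht

/-- The chain model of length k: worlds ℕ, i → i+1 as long as i+1 ≤ k. -/
def chainM (k : ℕ) : KModel := ⟨ℕ, fun i j => j = i + 1 ∧ j ≤ k, fun _ => ∅⟩

lemma chain_dia (k : ℕ) : ∀ (n i : ℕ), i + n ≤ k →
    (chainM k).sat i (diaIter n MF.top) := by
  intro n
  induction n with
  | zero => intro i _; trivial
  | succ n ih =>
    intro i h
    refine ⟨i + 1, ⟨rfl, ?_⟩, ih (i+1) (by omega)⟩
    omega

lemma chain_box (k : ℕ) : ∀ (n i : ℕ), i ≤ k → k < i + n →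
    (chainM k).sat i (boxIter n MF.bot) := by
  intro n
  induction n with
  | zero => intro i h1 h2; exact absurd h1 (by omega)
  | succ n ih =>
    intro i h1 h2 t ht
    obtain ⟨rfl, htk⟩ := ht
    exact ih (i+1) htk (by omega)

lemma chi_subsingleton (e : PModel) : Set.Subsingleton {n : ℕ | e.sat (chi n)} := by
  intro a ha b hb
  by_contra hne
  wlog hab : a < b generalizing a b
  · exact this hb ha (Ne.symm hne) (by omega)
  obtain ⟨hda, hba⟩ := ha
  obtain ⟨hdb, hbb⟩ := hb
  exact box_dia_contra e.M (a+1) e.s hba (dia_le e.M (by omega) e.s hdb)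

theorem box_bot_has_no_finite_characterization
    (P : Set ℕ) (hfin : P.Finite) (hne : P.Nonempty)
    (Epos Eneg : Set PModel) :
    ¬ FinChar {ψ : MF | inLang Set.univ P ψ} (MF.box MF.bot) Epos Eneg := by
  intro h
  obtain ⟨hEposFin, hEnegFin, hposfin, hnegfin, ⟨hfitpos, hfitneg⟩, hchar⟩ := h
  -- the set of n such that some negative example satisfies chi n is finite
  have hBfin : Set.Finite (⋃ e ∈ Eneg, {n : ℕ | e.sat (chi n)}) :=
    hEnegFin.biUnion (fun e _ => (chi_subsingleton e).finite)
  obtain ⟨N, hN⟩ := hBfin.bddAbove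
  set k := N + 1 with hk
  have hkB : k ∉ ⋃ e ∈ Eneg, {n : ℕ | e.sat (chi n)} := by
    intro hmem
    have := hN hmem
    omega
  set ψ : MF := (MF.box MF.bot).or (chi k) with hψ
  have hL : ψ ∈ {ψ : MF | inLang Set.univ P ψ} := by
    constructor
    · intro c _; trivial
    · have : ψ.vars = ∅ := by
        simp [MF.vars, hψ, chi, MF.pvars, MF.nvars, diaIter_pvars, diaIter_nvars,
          boxIter_pvars, boxIter_nvars]
      rw [this]
      exact Set.empty_subset P
  have hfits : Fits ψ Epos Eneg := by
    constructor
    · intro e he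
      exact Or.inl (hfitpos e he)
    · intro e he hsat
      rcases hsat with hsat | hsat
      · exact hfitneg e he hsat
      · exact hkB (Set.mem_biUnion he hsat)
  have hequiv := hchar ψ hL hfits
  -- the chain model of length k satisfies ψ but not □⊥
  have hsatψ : PModel.sat ⟨chainM k, (0 : ℕ)⟩ ψ :=
    Or.inr ⟨chain_dia k k 0 (by omega), chain_box k (k+1) 0 (by omega) (by omega)⟩
  have hsatbb : PModel.sat ⟨chainM k, (0 : ℕ)⟩ (MF.box MF.bot) :=
    (hequiv ⟨chainM k, (0 : ℕ)⟩).mpr hsatψ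
  exact hsatbb (1 : ℕ) ⟨rfl, by omega⟩
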